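/- Let μ be a complex Borel measure on ℂ^∞ = ℕ → ℂ (product topology) whose total variation |μ| is finite and concentrated on 𝔻^∞ = {z : |z_j| < 1 for all j}, and suppose μ is a Carleson measure for H²(𝕋^∞), i.e. there is C > 0 with ∫ |f(z)|² d|μ|(z) ≤ C ‖f‖² for every polynomial f. Define α(p^κ) = ∫ z^κ dμ(z) for every finitely supported multi-index κ. Then the Helson matrix M(α) is bounded on ℓ²(ℕ). -/

import Mathlib

open MeasureTheory Finset
open scoped BigOperators ENNReal

/-- `pPow κ = ∏_j p_j^{κ_j}` where `p_0 < p_1 < ⋯` are the primes. -/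
noncomputable def pPow (κ : ℕ →₀ ℕ) : ℕ :=
  κ.prod fun j e => Nat.nth Nat.Prime j ^ e

/-- The `H²(𝕋^∞)` norm of a polynomial: `‖f‖ = (∑_κ |f_κ|²)^{1/2}`. -/
noncomputable def h2Norm (f : MvPolynomial ℕ ℂ) : ℝ :=
  Real.sqrt (∑ κ ∈ f.support, ‖MvPolynomial.coeff κ f‖ ^ 2)

namespace Stmt3Aux

noncomputable def kap (n : ℕ) : ℕ →₀ ℕ :=
  Finsupp.comapDomain (Nat.nth Nat.Prime) n.factorization
    (Nat.nth_injective Nat.infinite_setOf_prime).injOn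

lemma kap_apply (n j : ℕ) : kap n j = n.factorization (Nat.nth Nat.Prime j) := rfl

lemma pPow_kap {n : ℕ} (hn : n ≠ 0) : pPow (kap n) = n := by
  conv_rhs => rw [← Nat.factorization_prod_pow_eq_self hn]
  rw [pPow, Finsupp.prod, Finsupp.prod]
  refine Finset.prod_nbij (Nat.nth Nat.Prime) ?_
    ((Nat.nth_injective Nat.infinite_setOf_prime).injOn) ?_ ?_
  · intro j hj
    rw [Finsupp.mem_support_iff] at hj ⊢
    exact hj
  · intro p hp
    rw [Finset.mem_coe, Finsupp.mem_support_iff] at hp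
    have hprime : p.Prime := Nat.prime_of_mem_primeFactors
      (by rw [← Nat.support_factorization, Finsupp.mem_support_iff]; exact hp)
    refine ⟨Nat.count Nat.Prime p, ?_, Nat.nth_count hprime⟩
    rw [Finset.mem_coe, Finsupp.mem_support_iff, kap_apply, Nat.nth_count hprime]
    exact hp
  · intro j hj
    rw [kap_apply]

lemma kap_mul {n m : ℕ} (hn : n ≠ 0) (hm : m ≠ 0) : kap (n * m) = kap n + kap m := by
  ext j
  simp [kap_apply, Nat.factorization_mul hn hm]

noncomputable def mon (κ : ℕ →₀ ℕ) (z : ℕ → ℂ) : ℂ := κ.prod fun j e => z j ^ e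

lemma measurable_mon (κ : ℕ →₀ ℕ) : Measurable (mon κ) := by
  unfold mon Finsupp.prod
  exact Finset.measurable_prod _ fun j _ => (measurable_pi_apply j).pow_const _

lemma abs_mon_le {z : ℕ → ℂ} (hz : ∀ j, ‖z j‖ < 1) (κ : ℕ →₀ ℕ) :
    ‖mon κ z‖ ≤ 1 := by
  rw [mon, Finsupp.prod, norm_prod]
  refine Finset.prod_le_one (fun j _ => by positivity) (fun j _ => ?_)
  rw [norm_pow]
  exact pow_le_one₀ (norm_nonneg _) (hz j).le

lemma mon_add (κ κ' : ℕ →₀ ℕ) (z : ℕ → ℂ) :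
    mon (κ + κ') z = mon κ z * mon κ' z :=
  Finsupp.prod_add_index' (by simp) (fun a b c => pow_add _ _ _)

lemma kap_injOn {s : Finset ℕ} (hs : (0:ℕ) ∉ s) : Set.InjOn kap s := by
  intro a ha b hb h
  have ha' : a ≠ 0 := by rintro rfl; exact hs ha
  have hb' : b ≠ 0 := by rintro rfl; exact hs hb
  have : pPow (kap a) = pPow (kap b) := by rw [h]
  rwa [pPow_kap ha', pPow_kap hb'] at this

noncomputable def poly (c : ℕ →₀ ℂ) : MvPolynomial ℕ ℂ :=
  ∑ n ∈ c.support, MvPolynomial.monomial (kap n) (c n)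

lemma eval_poly (c : ℕ →₀ ℂ) (z : ℕ → ℂ) :
    MvPolynomial.eval z (poly c) = ∑ n ∈ c.support, c n * mon (kap n) z := by
  rw [poly, map_sum]
  exact Finset.sum_congr rfl fun n _ => by rw [MvPolynomial.eval_monomial]; rfl

lemma coeff_poly (c : ℕ →₀ ℂ) (hc : c 0 = 0) {n : ℕ} (hn : n ∈ c.support) :
    MvPolynomial.coeff (kap n) (poly c) = c n := by
  have h0 : (0:ℕ) ∉ c.support := by simp [Finsupp.mem_support_iff, hc]
  rw [poly, MvPolynomial.coeff_sum]
  rw [Finset.sum_eq_single_of_mem n hn]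
  · rw [MvPolynomial.coeff_monomial, if_pos rfl]
  · intro b hb hbn
    rw [MvPolynomial.coeff_monomial, if_neg]
    exact fun h => hbn (kap_injOn h0 hb hn h)

lemma support_poly_subset (c : ℕ →₀ ℂ) :
    (poly c).support ⊆ c.support.image kap := by
  intro κ hκ
  rw [MvPolynomial.mem_support_iff] at hκ
  by_contra hmem
  apply hκ
  rw [poly, MvPolynomial.coeff_sum]
  refine Finset.sum_eq_zero fun n hn => ?_
  rw [MvPolynomial.coeff_monomial, if_neg]
  exact fun h => hmem (h ▸ Finset.mem_image_of_mem kap hn)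

lemma h2Norm_poly (c : ℕ →₀ ℂ) (hc : c 0 = 0) :
    h2Norm (poly c) = Real.sqrt (∑ n ∈ c.support, ‖c n‖ ^ 2) := by
  have h0 : (0:ℕ) ∉ c.support := by simp [Finsupp.mem_support_iff, hc]
  rw [h2Norm]
  congr 1
  rw [Finset.sum_subset (support_poly_subset c) (fun κ _ hκ => by
    rw [MvPolynomial.notMem_support_iff] at hκ
    simp [hκ])]
  rw [Finset.sum_image (fun x hx y hy h => kap_injOn h0 hx hy h)]
  exact Finset.sum_congr rfl fun n hn => by rw [coeff_poly c hc hn]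

end Stmt3Aux

open Stmt3Aux

theorem stmt3 (ν : Measure (ℕ → ℂ)) [IsFiniteMeasure ν]
    (hconc : ν {z | ¬ ∀ j, ‖z j‖ < 1} = 0)
    (w : (ℕ → ℂ) → ℂ) (hw_meas : Measurable w)
    (hw : ∀ᵐ z ∂ν, ‖w z‖ = 1)
    (hCarleson : ∃ C > 0, ∀ f : MvPolynomial ℕ ℂ,
      ∫ z, ‖MvPolynomial.eval z f‖ ^ 2 ∂ν ≤ C * h2Norm f ^ 2)
    (α : ℕ → ℂ)
    (hα : ∀ κ : ℕ →₀ ℕ,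
      α (pPow κ) = ∫ z, (κ.prod fun j e => z j ^ e) * w z ∂ν) :
    ∃ C > 0, ∀ f g : ℕ →₀ ℂ, f 0 = 0 → g 0 = 0 →
      ‖∑ n ∈ f.support, ∑ m ∈ g.support,
          α (n * m) * f n * (starRingEnd ℂ) (g m)‖ ≤
        C * Real.sqrt (∑ n ∈ f.support, ‖f n‖ ^ 2) *
          Real.sqrt (∑ m ∈ g.support, ‖g m‖ ^ 2) := by
  classical
  obtain ⟨C, hCpos, hCar⟩ := hCarleson
  refine ⟨C, hCpos, ?_⟩
  intro f g hf0 hg0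
  set g' : ℕ →₀ ℂ := g.mapRange (starRingEnd ℂ) (map_zero _) with hg'def
  have hg'app : ∀ m, g' m = (starRingEnd ℂ) (g m) := fun m => Finsupp.mapRange_apply
  have hg'supp : g'.support = g.support := by
    ext m
    simp only [Finsupp.mem_support_iff, hg'app]
    exact not_congr (map_eq_zero_iff _ (starRingEnd ℂ).injective)
  have hg'0 : g' 0 = 0 := by rw [hg'app, hg0, map_zero]
  have hD : ∀ᵐ z ∂ν, ∀ j, ‖z j‖ < 1 := by
    rw [ae_iff]; exact hconc
  -- integrability of each term
  have hint : ∀ (κ κ' : ℕ →₀ ℕ) (c : ℂ),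
      Integrable (fun z => mon κ z * mon κ' z * w z * c) ν := by
    intro κ κ' c
    refine (integrable_const (‖c‖)).mono'
      ((((measurable_mon κ).mul (measurable_mon κ')).mul hw_meas).mul
        measurable_const).aestronglyMeasurable ?_
    filter_upwards [hD, hw] with z hz hwz
    rw [norm_mul, norm_mul, norm_mul, hwz]
    calc ‖mon κ z‖ * ‖mon κ' z‖ * 1 * ‖c‖
        ≤ 1 * 1 * 1 * ‖c‖ := by
          gcongr
          · exact abs_mon_le hz κ
          · exact abs_mon_le hz κ'
      _ = ‖c‖ := by ring
  -- the key integral identity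
  have key : (∑ n ∈ f.support, ∑ m ∈ g.support,
        α (n * m) * f n * (starRingEnd ℂ) (g m)) =
      ∫ z, MvPolynomial.eval z (poly f) * MvPolynomial.eval z (poly g') * w z ∂ν := by
    have hterm : ∀ n ∈ f.support, ∀ m ∈ g.support,
        α (n * m) * f n * (starRingEnd ℂ) (g m) =
        ∫ z, mon (kap n) z * mon (kap m) z * w z * (f n * (starRingEnd ℂ) (g m)) ∂ν := by
      intro n hn m hm
      have hn0 : n ≠ 0 := by rintro rfl; exact (Finsupp.mem_support_iff.mp hn) hf0
      have hm0 : m ≠ 0 := by rintro rfl; exact (Finsupp.mem_support_iff.mp hm) hg0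
      have hnm : n * m = pPow (kap n + kap m) := by
        rw [← kap_mul hn0 hm0, pPow_kap (mul_ne_zero hn0 hm0)]
      rw [hnm, hα, mul_assoc, ← integral_mul_const]
      refine integral_congr_ae (Filter.Eventually.of_forall fun z => ?_)
      beta_reduce
      have : ((kap n + kap m).prod fun j e => z j ^ e) = mon (kap n) z * mon (kap m) z :=
        mon_add (kap n) (kap m) z
      rw [this]
      try ring
    rw [Finset.sum_congr rfl fun n hn => Finset.sum_congr rfl fun m hm => hterm n hn m hm]
    rw [Finset.sum_congr rfl fun n (hn : n ∈ f.support) =>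
      (integral_finset_sum g.support fun m _ => hint (kap n) (kap m) _).symm]
    rw [← integral_finset_sum f.support fun n _ =>
      integrable_finset_sum g.support fun m _ => hint (kap n) (kap m) _]
    refine integral_congr_ae (Filter.Eventually.of_forall fun z => ?_)
    beta_reduce
    rw [eval_poly, eval_poly, hg'supp, Finset.sum_mul_sum, Finset.sum_mul]
    refine Finset.sum_congr rfl fun n _ => ?_
    rw [Finset.sum_mul]
    refine Finset.sum_congr rfl fun m _ => ?_
    rw [hg'app]; ring
  rw [key]
  -- measurability and boundedness of the two polynomial evaluations
  have hmeas : ∀ c : ℕ →₀ ℂ, Measurable fun z => MvPolynomial.eval z (poly c) := by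
    intro c
    have : (fun z => MvPolynomial.eval z (poly c)) =
        fun z => ∑ n ∈ c.support, c n * mon (kap n) z := funext fun z => eval_poly c z
    rw [this]
    exact Finset.measurable_sum _ fun n _ => measurable_const.mul (measurable_mon _)
  have hbdd : ∀ c : ℕ →₀ ℂ, ∀ᵐ z ∂ν,
      ‖MvPolynomial.eval z (poly c)‖ ≤ ∑ n ∈ c.support, ‖c n‖ := by
    intro c
    filter_upwards [hD] with z hz
    rw [eval_poly]
    refine le_trans (norm_sum_le _ _) (Finset.sum_le_sum fun n _ => ?_)
    rw [norm_mul]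
    calc ‖c n‖ * ‖mon (kap n) z‖
        ≤ ‖c n‖ * 1 := by gcongr; exact abs_mon_le hz _
      _ = ‖c n‖ := mul_one _
  have hmem : ∀ c : ℕ →₀ ℂ, MemLp (fun z => ‖MvPolynomial.eval z (poly c)‖)
      (ENNReal.ofReal 2) ν := by
    intro c
    refine MemLp.of_bound (continuous_norm.measurable.comp (hmeas c)).aestronglyMeasurable
      (∑ n ∈ c.support, ‖c n‖) ?_
    filter_upwards [hbdd c] with z hz
    rwa [Real.norm_of_nonneg (norm_nonneg _)]
  -- Cauchy-Schwarz
  have hpq : Real.HolderConjugate 2 2 := Real.HolderConjugate.two_two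
  have hCS := integral_mul_le_Lp_mul_Lq_of_nonneg (μ := ν) hpq
    (Filter.Eventually.of_forall fun z => norm_nonneg _)
    (Filter.Eventually.of_forall fun z => norm_nonneg _)
    (hmem f) (hmem g')
  have habs : ‖∫ z, MvPolynomial.eval z (poly f) *
      MvPolynomial.eval z (poly g') * w z ∂ν‖ ≤
      ∫ z, ‖MvPolynomial.eval z (poly f)‖ *
        ‖MvPolynomial.eval z (poly g')‖ ∂ν := by
    refine le_trans (norm_integral_le_integral_norm _) (le_of_eq ?_)
    refine integral_congr_ae ?_
    filter_upwards [hw] with z hwz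
    rw [norm_mul, norm_mul,
      hwz, mul_one]
  -- convert the rpow exponents of Cauchy-Schwarz
  have hrpow : ∀ c : ℕ →₀ ℂ, (∫ z, ‖MvPolynomial.eval z (poly c)‖ ^ (2:ℝ) ∂ν)
      = ∫ z, ‖MvPolynomial.eval z (poly c)‖ ^ 2 ∂ν := by
    intro c
    refine integral_congr_ae (Filter.Eventually.of_forall fun z => ?_)
    beta_reduce
    rw [show (2:ℝ) = ((2:ℕ):ℝ) by norm_num, Real.rpow_natCast]
  rw [hrpow, hrpow] at hCS
  -- apply the Carleson hypothesis
  have hbound : ∀ c : ℕ →₀ ℂ, c 0 = 0 →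
      (∫ z, ‖MvPolynomial.eval z (poly c)‖ ^ 2 ∂ν) ^ (1/2 : ℝ) ≤
        Real.sqrt C * Real.sqrt (∑ n ∈ c.support, ‖c n‖ ^ 2) := by
    intro c hc0
    have h1 : (∫ z, ‖MvPolynomial.eval z (poly c)‖ ^ 2 ∂ν) ^ (1/2 : ℝ) ≤
        (C * h2Norm (poly c) ^ 2) ^ (1/2 : ℝ) :=
      Real.rpow_le_rpow (integral_nonneg fun z => by positivity) (hCar (poly c)) (by norm_num)
    refine h1.trans (le_of_eq ?_)
    rw [← Real.sqrt_eq_rpow, Real.sqrt_mul hCpos.le, h2Norm_poly c hc0,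
      Real.sq_sqrt (Finset.sum_nonneg fun n _ => by positivity)]
  have hB : ∑ m ∈ g'.support, ‖g' m‖ ^ 2 =
      ∑ m ∈ g.support, ‖g m‖ ^ 2 := by
    rw [hg'supp]
    exact Finset.sum_congr rfl fun m _ => by rw [hg'app, Complex.norm_conj]
  calc ‖∫ z, MvPolynomial.eval z (poly f) *
        MvPolynomial.eval z (poly g') * w z ∂ν‖
      ≤ ∫ z, ‖MvPolynomial.eval z (poly f)‖ *
          ‖MvPolynomial.eval z (poly g')‖ ∂ν := habs
    _ ≤ (∫ z, ‖MvPolynomial.eval z (poly f)‖ ^ 2 ∂ν) ^ (1/2 : ℝ) *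
        (∫ z, ‖MvPolynomial.eval z (poly g')‖ ^ 2 ∂ν) ^ (1/2 : ℝ) := hCS
    _ ≤ (Real.sqrt C * Real.sqrt (∑ n ∈ f.support, ‖f n‖ ^ 2)) *
        (Real.sqrt C * Real.sqrt (∑ m ∈ g'.support, ‖g' m‖ ^ 2)) := by
        refine mul_le_mul (hbound f hf0) (hbound g' hg'0)
          (Real.rpow_nonneg (integral_nonneg fun z => by positivity) _) (by positivity)
    _ = C * Real.sqrt (∑ n ∈ f.support, ‖f n‖ ^ 2) *
        Real.sqrt (∑ m ∈ g.support, ‖g m‖ ^ 2) := by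
        rw [hB]
        rw [show ∀ a b d : ℝ, (a * b) * (a * d) = (a * a) * b * d from fun a b d => by ring,
          Real.mul_self_sqrt hCpos.le]
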